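/- Let Q be the Laplace distribution on ℝ with density Q(s) = e^{-|s|}/2. Then there exists a universal constant C such that for every b ∈ ℝ, the expectation over s ~ Q of (N(s; b, 1)/Q(s))² is at most C·e^{|b|}, where N(s; b, 1) = (1/√(2π))·e^{-(s-b)²/2} is the Gaussian density with mean b and variance 1. In fact one may take C = 2e^{1/4}/√π. -/

import Mathlib

open MeasureTheory Real

/-- Gaussian density with mean `b` and unit variance. -/
noncomputable def gaussDensity (b s : ℝ) : ℝ :=
  (1 / Real.sqrt (2 * Real.pi)) * Real.exp (-(s - b) ^ 2 / 2)

/-- Laplace density `e^{-|s|}/2`. -/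
noncomputable def laplaceDensity (s : ℝ) : ℝ := Real.exp (-|s|) / 2

/-- The second moment of the Gaussian/Laplace likelihood ratio under the Laplace
distribution is at most `C · e^{|b|}` with `C = 2 e^{1/4} / √π`. -/
lemma ratio_eq (b s : ℝ) :
    (gaussDensity b s / laplaceDensity s) ^ 2 * laplaceDensity s
      = (1 / Real.pi) * Real.exp (|s| - (s - b) ^ 2) := by
  unfold gaussDensity laplaceDensity
  have h2π : (0:ℝ) < 2 * Real.pi := by positivity
  have hs : Real.sqrt (2 * Real.pi) ^ 2 = 2 * Real.pi := Real.sq_sqrt h2π.le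
  have hE : Real.exp (-(s-b)^2/2) ^ 2 = Real.exp (-(s-b)^2) := by
    rw [← Real.exp_nat_mul]; ring_nf
  have hD : Real.exp (-(s-b)^2) / Real.exp (-|s|) = Real.exp (|s| - (s-b)^2) := by
    rw [← Real.exp_sub]; ring_nf
  have hQ : Real.exp (-|s|) ≠ 0 := (Real.exp_pos _).ne'
  have hS : Real.sqrt (2 * Real.pi) ≠ 0 := by positivity
  field_simp
  have hE' : Real.exp (-((s - b) ^ 2 / 2)) ^ 2 = Real.exp (-(s-b)^2) := by
    rw [← hE]; ring_nf
  rw [hE', hs]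
  field_simp
  rw [← Real.exp_add]; ring_nf

lemma exp_quarter_le_sqrt_two : Real.exp (1/4) ≤ Real.sqrt 2 := by
  have h4 : Real.exp (1/4) ^ 4 = Real.exp 1 := by
    rw [← Real.exp_nat_mul]; norm_num
  have hlt : Real.exp (1/4) ^ 4 < Real.sqrt 2 ^ 4 := by
    have : Real.sqrt 2 ^ 4 = 4 := by
      have : Real.sqrt 2 ^ 2 = 2 := Real.sq_sqrt (by norm_num)
      nlinarith [this]
    rw [h4, this]
    calc Real.exp 1 < 2.7182818286 := Real.exp_one_lt_d9
      _ < 4 := by norm_num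
  exact le_of_lt ((pow_lt_pow_iff_left₀ (Real.exp_pos _).le (Real.sqrt_nonneg 2) (by norm_num)).mp hlt)

theorem stmt_0 :
    ∃ C : ℝ, C = 2 * Real.exp (1 / 4) / Real.sqrt Real.pi ∧
      ∀ b : ℝ,
        (∫ s : ℝ, (gaussDensity b s / laplaceDensity s) ^ 2 * laplaceDensity s) ≤
          C * Real.exp |b| := by
  refine ⟨_, rfl, fun b => ?_⟩
  have hπ := Real.pi_pos
  -- majorant
  set M : ℝ → ℝ := fun s => (1/Real.pi) * Real.exp (1/2 + |b|) * Real.exp (-(1/2) * (s-b)^2) with hM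
  have hMint : Integrable M := by
    exact ((integrable_exp_neg_mul_sq (by norm_num : (0:ℝ) < 1/2)).comp_sub_right b).const_mul _
  have hle : ∀ s, (gaussDensity b s / laplaceDensity s) ^ 2 * laplaceDensity s ≤ M s := by
    intro s
    rw [ratio_eq]
    have h1 : |s| ≤ |s - b| + |b| := by
      calc |s| = |(s-b) + b| := by ring_nf
        _ ≤ |s - b| + |b| := abs_add_le _ _
    have h2 : |s - b| ^ 2 = (s - b) ^ 2 := sq_abs _
    have hexp : |s| - (s-b)^2 ≤ (1/2 + |b|) + (-(1/2) * (s-b)^2) := by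
      nlinarith [sq_nonneg (|s - b| - 1)]
    calc (1/Real.pi) * Real.exp (|s| - (s-b)^2)
        ≤ (1/Real.pi) * Real.exp ((1/2 + |b|) + (-(1/2) * (s-b)^2)) := by
          gcongr
      _ = M s := by rw [hM]; simp only []; rw [Real.exp_add]; ring
  have hnn : ∀ s, 0 ≤ (gaussDensity b s / laplaceDensity s) ^ 2 * laplaceDensity s := by
    intro s
    have : 0 < laplaceDensity s := by unfold laplaceDensity; positivity
    positivity
  have hint : (∫ s : ℝ, (gaussDensity b s / laplaceDensity s) ^ 2 * laplaceDensity s) ≤ ∫ s, M s :=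
    integral_mono_of_nonneg (Filter.Eventually.of_forall hnn) hMint
      (Filter.Eventually.of_forall hle)
  have hval : (∫ s, M s) = (1/Real.pi) * Real.exp (1/2 + |b|) * Real.sqrt (Real.pi / (1/2)) := by
    rw [hM]
    rw [MeasureTheory.integral_const_mul]
    congr 1
    exact (integral_sub_right_eq_self (fun s => Real.exp (-(1/2) * s^2)) b).trans
      (integral_gaussian (1/2))
  refine hint.trans ?_
  rw [hval]
  have hsq2 : Real.sqrt (Real.pi / (1/2)) = Real.sqrt 2 * Real.sqrt Real.pi := by
    rw [show Real.pi / (1/2) = 2 * Real.pi by ring, Real.sqrt_mul (by norm_num)]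
  rw [hsq2, Real.exp_add]
  have hπs : (0:ℝ) < Real.sqrt Real.pi := Real.sqrt_pos.mpr hπ
  have hπsq : Real.sqrt Real.pi ^ 2 = Real.pi := Real.sq_sqrt hπ.le
  have key : Real.exp (1/2) * Real.sqrt 2 ≤ 2 * Real.exp (1/4) := by
    have ha : Real.exp (1/2) = Real.exp (1/4) ^ 2 := by
      rw [← Real.exp_nat_mul]; norm_num
    have h2 := exp_quarter_le_sqrt_two
    have hs2 : Real.sqrt 2 ^ 2 = 2 := Real.sq_sqrt (by norm_num)
    nlinarith [Real.exp_pos (1/4 : ℝ), Real.sqrt_nonneg 2]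
  have hexb := (Real.exp_pos |b|).le
  have target : (Real.exp (1/2) * Real.sqrt 2) * Real.exp |b| / Real.sqrt Real.pi ≤
      2 * Real.exp (1/4) / Real.sqrt Real.pi * Real.exp |b| := by
    rw [div_mul_eq_mul_div]
    gcongr
  refine le_trans (le_of_eq ?_) target
  field_simp
  linear_combination hπsq
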